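/- Let H be a real Hilbert space and L : H × H → ℝ ∪ {+∞} an anti-selfdual Lagrangian that is uniformly convex in both variables, i.e., there is ε > 0 such that (x,p) ↦ L(x,p) − (ε/2)(‖x‖² + ‖p‖²) is convex. Then for all u, x ∈ H there exists a unique v ∈ H, denoted R(u,x), such that x ∈ ∂₂L(u,v); moreover the map (u,x) ↦ R(u,x) is jointly Lipschitz on H × H, i.e., there is K > 0 such that ‖R(u₁,x₁) − R(u₂,x₂)‖ ≤ K(‖u₁ − u₂‖ + ‖x₁ − x₂‖) for all u₁,u₂,x₁,x₂ ∈ H. -/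

import Mathlib

open scoped RealInnerProductSpace NNReal
set_option maxHeartbeats 1000000

noncomputable section

/-- Convexity for `EReal`-valued functions. -/
def ERealConvexOn {E : Type*} [AddCommGroup E] [Module ℝ E] (f : E → EReal) : Prop :=
  ∀ x y : E, ∀ s t : ℝ, 0 ≤ s → 0 ≤ t → s + t = 1 →
    f (s • x + t • y) ≤ (s : EReal) * f x + (t : EReal) * f y

/-- The Legendre–Fenchel dual, in both variables, of a Lagrangian on `H × H`. -/
def lagrangianDualH {H : Type*} [NormedAddCommGroup H] [InnerProductSpace ℝ H]
    (L : H × H → EReal) (q y : H) : EReal :=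
  ⨆ x : H, ⨆ p : H, ((⟪q, x⟫ + ⟪y, p⟫ : ℝ) : EReal) - L (x, p)

/-- A Lagrangian on a Hilbert space is anti-selfdual if `L*(p,x) = L(−x,−p)`. -/
def IsASDH {H : Type*} [NormedAddCommGroup H] [InnerProductSpace ℝ H]
    (L : H × H → EReal) : Prop :=
  ∀ p x : H, lagrangianDualH L p x = L (-x, -p)

/-- `(q,y) ∈ ∂L(x,p)`, the subdifferential of the Lagrangian `L` at `(x,p)`. -/
def MemSubdiff {H : Type*} [NormedAddCommGroup H] [InnerProductSpace ℝ H]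
    (L : H × H → EReal) (x p q y : H) : Prop :=
  ∀ z r : H, L (x, p) + ((⟪q, z - x⟫ + ⟪y, r - p⟫ : ℝ) : EReal) ≤ L (z, r)

/-- `y ∈ ∂₂L(u,v)`, the subdifferential in the second variable. -/
def MemSubdiff2 {H : Type*} [NormedAddCommGroup H] [InnerProductSpace ℝ H]
    (L : H × H → EReal) (u v y : H) : Prop :=
  ∀ r : H, L (u, v) + ((⟪y, r - v⟫ : ℝ) : EReal) ≤ L (u, r)

/-- `q ∈ ∂₁L(x,p)`, the subdifferential in the first variable. -/
def MemSubdiff1 {H : Type*} [NormedAddCommGroup H] [InnerProductSpace ℝ H]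
    (L : H × H → EReal) (x p q : H) : Prop :=
  ∀ z : H, L (x, p) + ((⟪q, z - x⟫ : ℝ) : EReal) ≤ L (z, p)

/-- The `λ`-regularization of a Lagrangian:
`L_λ(x,p) = inf_z { L(z,p) + ‖x−z‖²/(2λ) } + (λ/2)‖p‖²`. -/
def lagReg {H : Type*} [NormedAddCommGroup H] [InnerProductSpace ℝ H]
    (lam : ℝ) (L : H × H → EReal) (x p : H) : EReal :=
  (⨅ z : H, L (z, p) + ((‖x - z‖ ^ 2 / (2 * lam) : ℝ) : EReal))
    + ((lam / 2 * ‖p‖ ^ 2 : ℝ) : EReal)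

/- ## auxiliary lemmas -/
section helpers
variable {E : Type*} [NormedAddCommGroup E] [InnerProductSpace ℝ E]

lemma two_smul_inner_le (a b : E) (s : ℝ) : 2*s*⟪a,b⟫ ≤ ‖a‖^2 + s^2*‖b‖^2 := by
  have h0 : (0:ℝ) ≤ ‖a - s•b‖^2 := sq_nonneg _
  rw [norm_sub_sq_real, real_inner_smul_right, norm_smul, Real.norm_eq_abs, mul_pow, sq_abs] at h0
  nlinarith

lemma sqnorm_combo (x y : E) (s t : ℝ) (hs : 0 ≤ s) (ht : 0 ≤ t) (hst : s + t = 1) :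
    ‖s•x + t•y‖^2 ≤ s*‖x‖^2 + t*‖y‖^2 := by
  rw [norm_add_sq_real, real_inner_smul_left, real_inner_smul_right, norm_smul, norm_smul,
    Real.norm_eq_abs, Real.norm_eq_abs, mul_pow, mul_pow, sq_abs, sq_abs]
  have h := norm_sub_sq_real x y
  have key : 0 ≤ s*t*(‖x‖^2 - 2*⟪x,y⟫ + ‖y‖^2) := by
    rw [← h]; positivity
  have e1 : s^2*‖x‖^2 = s*‖x‖^2 - s*t*‖x‖^2 := by linear_combination (s*‖x‖^2)*hst
  have e2 : t^2*‖y‖^2 = t*‖y‖^2 - s*t*‖y‖^2 := by linear_combination (t*‖y‖^2)*hst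
  linarith [key, e1, e2]

lemma norm_sub_smul_sq (a c : E) (s : ℝ) : ‖a - s•c‖^2 = ‖a‖^2 - 2*s*⟪a,c⟫ + s^2*‖c‖^2 := by
  rw [norm_sub_sq_real, real_inner_smul_right, norm_smul, Real.norm_eq_abs, mul_pow, sq_abs]
  ring

lemma norm_add_smul_sq (a c : E) (s : ℝ) : ‖a + s•c‖^2 = ‖a‖^2 + 2*s*⟪a,c⟫ + s^2*‖c‖^2 := by
  rw [norm_add_sq_real, real_inner_smul_right, norm_smul, Real.norm_eq_abs, mul_pow, sq_abs]
  ring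

lemma half_half_sq (x y : E) :
    ‖(1/2:ℝ)•x + (1/2:ℝ)•y‖^2 = ‖x‖^2/2 + ‖y‖^2/2 - ‖x - y‖^2/4 := by
  rw [← smul_add, norm_smul, Real.norm_eq_abs, mul_pow, sq_abs, norm_add_sq_real,
    norm_sub_sq_real]
  ring

lemma inner_quarter {ε : ℝ} (hε : 0 < ε) (y w c : E) :
    ⟪y, w⟫ ≤ (2/ε)*‖y‖^2 + ε/8*‖w - c‖^2 + ⟪y, c⟫ := by
  have h1 := two_smul_inner_le y (w - c) (ε/4)
  have h3 : ε/2 * ⟪y, w - c⟫ ≤ ε/2 * ((2/ε)*‖y‖^2 + ε/8*‖w - c‖^2) := by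
    have e1 : ε/2*((2/ε)*‖y‖^2) = ‖y‖^2 := by field_simp
    rw [mul_add, e1]
    nlinarith [h1]
  have h4 := le_of_mul_le_mul_left h3 (half_pos hε)
  have h5 : ⟪y, w⟫ = ⟪y, w - c⟫ + ⟪y, c⟫ := by
    rw [← inner_add_right]
    rw [sub_add_cancel]
  rw [h5]; linarith

end helpers

section ereal
variable {H : Type*} [NormedAddCommGroup H] [InnerProductSpace ℝ H]
variable (L : H × H → EReal) (ε : ℝ) (hε : 0 < ε)
    (hreal : ∀ z, L z ≠ ⊥)

include hreal in
lemma lem_fy (hASD : ∀ p x : H, lagrangianDualH L p x = L (-x, -p)) :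
    ∀ z : H × H, ((-⟪z.1, z.2⟫ : ℝ) : EReal) ≤ L z := by
  intro z
  rcases eq_or_ne (L z) ⊤ with h | h
  · rw [h]; exact le_top
  · have hz : L z = ((L z).toReal : EReal) := (EReal.coe_toReal h (hreal z)).symm
    have hd : lagrangianDualH L (-z.2) (-z.1) = L z := by
      have := hASD (-z.2) (-z.1); simpa using this
    have hterm : ((⟪-z.2, z.1⟫ + ⟪-z.1, z.2⟫ : ℝ) : EReal) - L (z.1, z.2) ≤
        lagrangianDualH L (-z.2) (-z.1) := by
      refine le_trans ?_ (le_iSup _ z.1)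
      exact le_trans (le_refl _)
        (le_iSup (fun p => ((⟪-z.2, z.1⟫ + ⟪-z.1, p⟫ : ℝ) : EReal) - L (z.1, p)) z.2)
    rw [hd] at hterm
    set r := (L z).toReal with hr
    rw [show z = (z.1, z.2) from rfl] at hz
    rw [hz] at hterm ⊢
    rw [← EReal.coe_sub] at hterm
    rw [EReal.coe_le_coe_iff] at hterm ⊢
    have : ⟪-z.2, z.1⟫ + ⟪-z.1, z.2⟫ = -2*⟪z.1,z.2⟫ := by
      rw [inner_neg_left, inner_neg_left, real_inner_comm]; ring
    rw [this] at hterm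
    linarith

variable (hunif : ERealConvexOn (fun zp : H × H =>
      L zp - ((ε / 2 * (‖zp.1‖ ^ 2 + ‖zp.2‖ ^ 2) : ℝ) : EReal)))
    (hfy : ∀ z : H × H, ((-⟪z.1, z.2⟫ : ℝ) : EReal) ≤ L z)

include hε hreal hunif hfy in
lemma lem_lowq (z₀ : H × H) (h₀ : L z₀ ≠ ⊤) :
    ∃ C : ℝ, ∀ z : H × H,
      ((ε/8 * (‖z.1 - z₀.1‖^2 + ‖z.2 - z₀.2‖^2) - C : ℝ) : EReal) ≤ L z := by
  set t : ℝ := ε/(8*(1+ε)) with ht_def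
  have hε1 : (0:ℝ) < 1 + ε := by linarith
  have htpos : 0 < t := by positivity
  have ht1 : t < 1 := by
    rw [ht_def, div_lt_one (by positivity)]; nlinarith
  have h_te : (1+ε)*t = ε/8 := by rw [ht_def]; field_simp
  set l₀ : ℝ := (L z₀).toReal with hl₀
  have hz₀ : L z₀ = (l₀ : EReal) := (EReal.coe_toReal h₀ (hreal z₀)).symm
  set C : ℝ := ((1+2*ε)*(‖z₀.1‖^2 + ‖z₀.2‖^2) + |l₀|)/t with hCdef
  have htC : t*C = (1+2*ε)*(‖z₀.1‖^2 + ‖z₀.2‖^2) + |l₀| := by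
    rw [hCdef]; field_simp
  refine ⟨C, fun z => ?_⟩
  rcases eq_or_ne (L z) ⊤ with hz | hz
  · rw [hz]; exact le_top
  set lz : ℝ := (L z).toReal with hlz
  have hzz : L z = (lz : EReal) := (EReal.coe_toReal hz (hreal z)).symm
  set s : ℝ := 1 - t with hs_def
  have hs0 : (0:ℝ) ≤ s := by linarith
  have hst : s + t = 1 := by ring
  have hsl : s*l₀ ≤ |l₀| := by
    nlinarith [le_abs_self l₀, neg_abs_le l₀, abs_nonneg l₀]
  have hmid := hunif z₀ z s t hs0 htpos.le hst
  set mid : H × H := s • z₀ + t • z with hmid_def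
  have hmt : L mid ≠ ⊤ := by
    intro htop
    simp only [← hmid_def, htop, hz₀, hzz, EReal.top_sub_coe, ← EReal.coe_sub,
      ← EReal.coe_mul, ← EReal.coe_add] at hmid
    exact absurd hmid (not_le.mpr (EReal.coe_lt_top _))
  set lm : ℝ := (L mid).toReal with hlm
  have hzm : L mid = (lm : EReal) := (EReal.coe_toReal hmt (hreal mid)).symm
  clear_value t l₀ C lz s mid lm
  simp only [] at hmid
  rw [hzm, hz₀, hzz, ← EReal.coe_sub, ← EReal.coe_sub, ← EReal.coe_sub, ← EReal.coe_mul,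
    ← EReal.coe_mul, ← EReal.coe_add, EReal.coe_le_coe_iff] at hmid
  have hfym : -⟪mid.1, mid.2⟫ ≤ lm := by
    have := hfy mid; rw [hzm, EReal.coe_le_coe_iff] at this; exact this
  have hip : 2*⟪mid.1, mid.2⟫ ≤ ‖mid.1‖^2 + ‖mid.2‖^2 := by
    have := two_smul_inner_le mid.1 mid.2 1; simpa using this
  set w1 : H := z.1 - z₀.1 with hw1
  set w2 : H := z.2 - z₀.2 with hw2
  have hm1 : mid.1 = z₀.1 + t•w1 := by
    rw [hmid_def, hw1, hs_def]; simp only [Prod.fst_add, Prod.smul_fst]; module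
  have hm2 : mid.2 = z₀.2 + t•w2 := by
    rw [hmid_def, hw2, hs_def]; simp only [Prod.snd_add, Prod.smul_snd]; module
  have hzc1 : z.1 = z₀.1 + (1:ℝ)•w1 := by rw [hw1]; simp
  have hzc2 : z.2 = z₀.2 + (1:ℝ)•w2 := by rw [hw2]; simp
  have F3 : ‖mid.1‖^2 = ‖z₀.1‖^2 + 2*t*⟪z₀.1,w1⟫ + t^2*‖w1‖^2 := by
    rw [hm1, norm_add_smul_sq]
  have F4 : ‖mid.2‖^2 = ‖z₀.2‖^2 + 2*t*⟪z₀.2,w2⟫ + t^2*‖w2‖^2 := by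
    rw [hm2, norm_add_smul_sq]
  have F5 : ‖z.1‖^2 = ‖z₀.1‖^2 + 2*⟪z₀.1,w1⟫ + ‖w1‖^2 := by
    rw [hzc1, norm_add_smul_sq]; ring_nf
  have F6 : ‖z.2‖^2 = ‖z₀.2‖^2 + 2*⟪z₀.2,w2⟫ + ‖w2‖^2 := by
    rw [hzc2, norm_add_smul_sq]; ring_nf
  have F7 : 2*t*⟪z₀.1,w1⟫ ≤ ‖z₀.1‖^2 + t^2*‖w1‖^2 := two_smul_inner_le _ _ t
  have F8 : 2*t*⟪z₀.2,w2⟫ ≤ ‖z₀.2‖^2 + t^2*‖w2‖^2 := two_smul_inner_le _ _ t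
  have F9a : -⟪z₀.1,w1⟫ ≤ ‖z₀.1‖^2 + ‖w1‖^2/4 := by
    have h := two_smul_inner_le z₀.1 w1 (-(1/2)); norm_num at h; linarith
  have F9b : -⟪z₀.2,w2⟫ ≤ ‖z₀.2‖^2 + ‖w2‖^2/4 := by
    have h := two_smul_inner_le z₀.2 w2 (-(1/2)); norm_num at h; linarith
  have c1 : -(‖mid.1‖^2 + ‖mid.2‖^2)/2 ≤ lm := by linarith
  have c2 : -(‖mid.1‖^2 + ‖mid.2‖^2)/2 - (ε/2)*(‖mid.1‖^2 + ‖mid.2‖^2)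
      + (ε/2)*s*(‖z₀.1‖^2 + ‖z₀.2‖^2) + (ε/2)*t*(‖z.1‖^2 + ‖z.2‖^2) - s*l₀ ≤ t*lz := by
    linarith [hmid, c1]
  have c3 : ‖mid.1‖^2 + ‖mid.2‖^2 ≤ 2*(‖z₀.1‖^2 + ‖z₀.2‖^2) + 2*t^2*(‖w1‖^2 + ‖w2‖^2) := by
    linarith
  have c4 : ((1+ε)/2)*(‖mid.1‖^2 + ‖mid.2‖^2)
      ≤ ((1+ε)/2)*(2*(‖z₀.1‖^2 + ‖z₀.2‖^2) + 2*t^2*(‖w1‖^2 + ‖w2‖^2)) :=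
    mul_le_mul_of_nonneg_left c3 (by positivity)
  have c5 : (‖w1‖^2 + ‖w2‖^2)/2 - (‖z₀.1‖^2 + ‖z₀.2‖^2) ≤ ‖z.1‖^2 + ‖z.2‖^2 := by
    linarith
  have c6 : (ε*t/2)*((‖w1‖^2 + ‖w2‖^2)/2 - (‖z₀.1‖^2 + ‖z₀.2‖^2))
      ≤ (ε*t/2)*(‖z.1‖^2 + ‖z.2‖^2) := mul_le_mul_of_nonneg_left c5 (by positivity)
  have E : (1+ε)*(t^2*(‖w1‖^2 + ‖w2‖^2)) = ε/8*(t*(‖w1‖^2 + ‖w2‖^2)) := by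
    linear_combination (t*(‖w1‖^2 + ‖w2‖^2))*h_te
  have c7 : (ε/8)*(t*(‖w1‖^2 + ‖w2‖^2))
      - ((1+ε)*(‖z₀.1‖^2 + ‖z₀.2‖^2) - (ε/2)*s*(‖z₀.1‖^2 + ‖z₀.2‖^2)
        + (ε*t/2)*(‖z₀.1‖^2 + ‖z₀.2‖^2) + s*l₀) ≤ t*lz := by
    linarith [c2, c4, c6, E]
  have n1 : (0:ℝ) ≤ ε*s*(‖z₀.1‖^2 + ‖z₀.2‖^2) :=
    mul_nonneg (mul_nonneg hε.le hs0) (by positivity)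
  have n2 : (0:ℝ) ≤ ε*(1-t)*(‖z₀.1‖^2 + ‖z₀.2‖^2) :=
    mul_nonneg (mul_nonneg hε.le (by linarith : (0:ℝ) ≤ 1 - t)) (by positivity)
  have c8 : (1+ε)*(‖z₀.1‖^2 + ‖z₀.2‖^2) - (ε/2)*s*(‖z₀.1‖^2 + ‖z₀.2‖^2)
      + (ε*t/2)*(‖z₀.1‖^2 + ‖z₀.2‖^2) + s*l₀ ≤ t*C := by
    have n3 : ε/2*s*(‖z₀.1‖^2 + ‖z₀.2‖^2) + ε/2*t*(‖z₀.1‖^2 + ‖z₀.2‖^2)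
        = ε/2*(‖z₀.1‖^2 + ‖z₀.2‖^2) := by rw [hs_def]; ring
    have n4 : (0:ℝ) ≤ ε*(‖z₀.1‖^2 + ‖z₀.2‖^2) := by positivity
    rw [htC]; linarith [hsl, n1, n2, n3, n4]
  have c10 : t*((ε/8)*(‖w1‖^2 + ‖w2‖^2) - C) ≤ t*lz := by linarith [c7, c8]
  have final : (ε/8)*(‖w1‖^2 + ‖w2‖^2) - C ≤ lz := le_of_mul_le_mul_left c10 htpos
  rw [hzz, EReal.coe_le_coe_iff]
  exact final

include hε hreal in
lemma lem_fin (hASD : ∀ p x : H, lagrangianDualH L p x = L (-x, -p))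
    (z₀ : H × H) (C : ℝ)
    (hlow : ∀ z : H × H, ((ε/8 * (‖z.1 - z₀.1‖^2 + ‖z.2 - z₀.2‖^2) - C : ℝ) : EReal) ≤ L z) :
    ∀ z : H × H, L z ≠ ⊤ := by
  intro z
  have hd : lagrangianDualH L (-z.2) (-z.1) = L z := by
    have := hASD (-z.2) (-z.1); simpa using this
  set B : ℝ := -⟪z.2, z₀.1⟫ - ⟪z.1, z₀.2⟫ + (2/ε)*(‖z.2‖^2 + ‖z.1‖^2) + C with hB
  have hub : L z ≤ (B : EReal) := by
    rw [← hd]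
    refine iSup_le fun a => iSup_le fun b => ?_
    rcases eq_or_ne (L (a,b)) ⊤ with h | h
    · rw [h]
      have : ((⟪-z.2, a⟫ + ⟪-z.1, b⟫ : ℝ) : EReal) - ⊤ = ⊥ := by
        rw [sub_eq_add_neg]; simp
      rw [this]; exact bot_le
    · set lab : ℝ := (L (a,b)).toReal with hlab
      have hab : L (a,b) = (lab : EReal) := (EReal.coe_toReal h (hreal (a,b))).symm
      have hlo := hlow (a,b)
      rw [hab, EReal.coe_le_coe_iff] at hlo
      rw [hab, ← EReal.coe_sub, EReal.coe_le_coe_iff]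
      simp only [] at hlo
      have k1 := inner_quarter hε (-z.2) a z₀.1
      have k2 := inner_quarter hε (-z.1) b z₀.2
      rw [norm_neg] at k1 k2
      have e2 : ⟪-z.2, z₀.1⟫ = -⟪z.2, z₀.1⟫ := by rw [inner_neg_left]
      have e3 : ⟪-z.1, z₀.2⟫ = -⟪z.1, z₀.2⟫ := by rw [inner_neg_left]
      rw [hB]
      linarith [hlo, k1, k2]
  intro htop
  rw [htop] at hub
  exact absurd hub (not_le.mpr (EReal.coe_lt_top _))

end ereal

open Filter in
lemma lem_min {H : Type*} [NormedAddCommGroup H] [InnerProductSpace ℝ H] [CompleteSpace H]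
    (f : H → ℝ) (ε : ℝ) (hε : 0 < ε)
    (hmidp : ∀ p q : H, f ((1/2:ℝ)•p + (1/2:ℝ)•q) ≤ f p/2 + f q/2 - ε/8*‖p - q‖^2)
    (hbdd : BddBelow (Set.range f))
    (hlsc : LowerSemicontinuous f) :
    ∃ v : H, ∀ p, f v ≤ f p := by
  set m : ℝ := sInf (Set.range f) with hm
  have hm_le : ∀ p, m ≤ f p := fun p => csInf_le hbdd ⟨p, rfl⟩
  have hex : ∀ n : ℕ, ∃ p : H, f p < m + 1/((n:ℝ)+1) := by
    intro n
    have hpos : (0:ℝ) < 1/((n:ℝ)+1) := by positivity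
    have hlt : sInf (Set.range f) < m + 1/((n:ℝ)+1) := by rw [← hm]; linarith
    obtain ⟨y, ⟨p, rfl⟩, hy⟩ := exists_lt_of_csInf_lt (Set.range_nonempty f) hlt
    exact ⟨p, hy⟩
  choose u hu using hex
  have hsq : ∀ n k : ℕ, ε/8*‖u n - u k‖^2 ≤ (1/((n:ℝ)+1) + 1/((k:ℝ)+1))/2 := by
    intro n k
    have h1 := hmidp (u n) (u k)
    have h2 := hm_le ((1/2:ℝ)•(u n) + (1/2:ℝ)•(u k))
    have h3 := hu n; have h4 := hu k
    linarith
  have hcauchy : CauchySeq u := by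
    rw [Metric.cauchySeq_iff']
    intro δ hδ
    obtain ⟨N, hN⟩ := exists_nat_gt (8/(ε*δ^2))
    refine ⟨N, fun n hn => ?_⟩
    have h1 := hsq n N
    have h2 : 1/((n:ℝ)+1) ≤ 1/((N:ℝ)+1) := by
      apply one_div_le_one_div_of_le (by positivity)
      have : (N:ℝ) ≤ n := by exact_mod_cast hn
      linarith
    have h3 : ε/8*‖u n - u N‖^2 ≤ 1/((N:ℝ)+1) := by linarith
    have hNpos : (0:ℝ) < (N:ℝ)+1 := by positivity
    have h4 : 8/(ε*δ^2) < (N:ℝ)+1 := by linarith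
    have h5 : ‖u n - u N‖^2 < δ^2 := by
      have h6 : 1/((N:ℝ)+1) < ε*δ^2/8 := by
        have h7 := one_div_lt_one_div_of_lt (by positivity : (0:ℝ) < 8/(ε*δ^2)) h4
        rw [one_div_div] at h7
        linarith
      nlinarith [h3]
    rw [dist_eq_norm]
    nlinarith [norm_nonneg (u n - u N), hδ]
  obtain ⟨v, hv⟩ := cauchySeq_tendsto_of_complete hcauchy
  refine ⟨v, fun p => ?_⟩
  have hfv : f v ≤ m := by
    by_contra hlt
    push_neg at hlt
    have hyv : (m + f v)/2 < f v := by linarith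
    have A : ∀ᶠ n in atTop, (m + f v)/2 < f (u n) := hv.eventually (hlsc v _ hyv)
    have B : ∀ᶠ n : ℕ in atTop, 1/((n:ℝ)+1) < (f v - m)/2 :=
      Filter.Tendsto.eventually_lt_const (by linarith : (0:ℝ) < (f v - m)/2)
        tendsto_one_div_add_atTop_nhds_zero_nat
    obtain ⟨n, hA, hB⟩ := (A.and B).exists
    have := hu n
    linarith
  exact le_trans hfv (hm_le p)


/-- an ASD Lagrangian uniformly convex in both variables admits, for each
`(u,x)`, a unique `v = R(u,x)` with `x ∈ ∂₂L(u,v)`, and `R` is jointly Lipschitz. -/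
theorem stmt7 {H : Type*} [NormedAddCommGroup H] [InnerProductSpace ℝ H] [CompleteSpace H]
    (L : H × H → EReal)
    (hconv : ERealConvexOn L)
    (hlsc : LowerSemicontinuous L)
    (hproper : ∃ z, L z ≠ ⊤) (hreal : ∀ z, L z ≠ ⊥)
    (hASD : IsASDH L)
    (ε : ℝ) (hε : 0 < ε)
    (hunif : ERealConvexOn (fun zp : H × H =>
      L zp - ((ε / 2 * (‖zp.1‖ ^ 2 + ‖zp.2‖ ^ 2) : ℝ) : EReal))) :
    ∃ R : H → H → H,
      (∀ u x : H, MemSubdiff2 L u (R u x) x ∧ ∀ v : H, MemSubdiff2 L u v x → v = R u x) ∧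
      (∃ K : ℝ, 0 < K ∧ ∀ u₁ x₁ u₂ x₂ : H,
        ‖R u₁ x₁ - R u₂ x₂‖ ≤ K * (‖u₁ - u₂‖ + ‖x₁ - x₂‖)) := by
  classical
  obtain ⟨z₀, hz₀top⟩ := hproper
  have hfy := lem_fy L hreal hASD
  obtain ⟨C₀, hlow⟩ := lem_lowq L ε hε hreal hunif hfy z₀ hz₀top
  have hfin : ∀ z, L z ≠ ⊤ := lem_fin L ε hε hreal hASD z₀ C₀ hlow
  set l : H × H → ℝ := fun z => (L z).toReal with hldef
  have hLl : ∀ z, L z = ((l z : ℝ) : EReal) := fun z =>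
    (EReal.coe_toReal (hfin z) (hreal z)).symm
  have hlow' : ∀ z : H × H, ε/8 * (‖z.1 - z₀.1‖^2 + ‖z.2 - z₀.2‖^2) - C₀ ≤ l z := by
    intro z; have := hlow z; rw [hLl z, EReal.coe_le_coe_iff] at this; exact this
  have hlconv : ∀ a b : H × H, ∀ s t : ℝ, 0 ≤ s → 0 ≤ t → s + t = 1 →
      l (s•a + t•b) ≤ s*l a + t*l b := by
    intro a b s t hs ht hst
    have h := hconv a b s t hs ht hst
    rw [hLl, hLl, hLl, ← EReal.coe_mul, ← EReal.coe_mul, ← EReal.coe_add,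
      EReal.coe_le_coe_iff] at h
    exact h
  have hMconv : ∀ a b : H × H, ∀ s t : ℝ, 0 ≤ s → 0 ≤ t → s + t = 1 →
      l (s•a + t•b) - ε/2*(‖(s•a + t•b).1‖^2 + ‖(s•a + t•b).2‖^2)
        ≤ s*(l a - ε/2*(‖a.1‖^2 + ‖a.2‖^2)) + t*(l b - ε/2*(‖b.1‖^2 + ‖b.2‖^2)) := by
    intro a b s t hs ht hst
    have h := hunif a b s t hs ht hst
    simp only [] at h
    rw [hLl, hLl, hLl, ← EReal.coe_sub, ← EReal.coe_sub, ← EReal.coe_sub,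
      ← EReal.coe_mul, ← EReal.coe_mul, ← EReal.coe_add, EReal.coe_le_coe_iff] at h
    exact h
  have hllsc : LowerSemicontinuous l := by
    intro z y hy
    have h2 := hlsc z ((y:ℝ) : EReal) (by change L z > _; rw [hLl z]; exact_mod_cast hy)
    refine h2.mono fun w hw => ?_
    change L w > _ at hw; change l w > y
    rw [hLl w] at hw; exact_mod_cast hw
  -- the dual as a real function
  set lstar : H × H → ℝ := fun u => l (-u.2, -u.1) with hlstardef
  have hdual : ∀ u : H × H, lagrangianDualH L u.1 u.2 = ((lstar u : ℝ) : EReal) := by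
    intro u
    rw [hASD u.1 u.2, hLl]
  have D1 : ∀ u z : H × H, (⟪u.1, z.1⟫ + ⟪u.2, z.2⟫) - l z ≤ lstar u := by
    intro u z
    have hterm : ((⟪u.1, z.1⟫ + ⟪u.2, z.2⟫ : ℝ) : EReal) - L (z.1, z.2)
        ≤ lagrangianDualH L u.1 u.2 := by
      refine le_trans ?_ (le_iSup _ z.1)
      exact le_iSup (fun p => ((⟪u.1, z.1⟫ + ⟪u.2, p⟫ : ℝ) : EReal) - L (z.1, p)) z.2
    rw [hdual u, show (z.1, z.2) = z from rfl, hLl, ← EReal.coe_sub,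
      EReal.coe_le_coe_iff] at hterm
    exact hterm
  have D2 : ∀ u : H × H, ∀ δ : ℝ, 0 < δ →
      ∃ z : H × H, lstar u - δ ≤ (⟪u.1, z.1⟫ + ⟪u.2, z.2⟫) - l z := by
    intro u δ hδ
    have hlt : ((lstar u - δ : ℝ) : EReal) < lagrangianDualH L u.1 u.2 := by
      rw [hdual u]; exact_mod_cast (by linarith : lstar u - δ < lstar u)
    rw [lagrangianDualH, lt_iSup_iff] at hlt
    obtain ⟨x, hx⟩ := hlt
    rw [lt_iSup_iff] at hx
    obtain ⟨p, hp⟩ := hx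
    refine ⟨(x, p), ?_⟩
    rw [hLl, ← EReal.coe_sub, EReal.coe_lt_coe_iff] at hp
    exact hp.le
  -- Convexity of the smoothness defect of the dual
  set Cfun : H × H → ℝ := fun u => 1/(2*ε)*(‖u.1‖^2 + ‖u.2‖^2) - lstar u with hCfundef
  clear_value l lstar Cfun
  have hid : ∀ u z : H × H, 1/(2*ε)*(‖u.1‖^2 + ‖u.2‖^2) - (⟪u.1, z.1⟫ + ⟪u.2, z.2⟫)
      = 1/(2*ε)*(‖u.1 - ε•z.1‖^2 + ‖u.2 - ε•z.2‖^2) - ε/2*(‖z.1‖^2 + ‖z.2‖^2) := by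
    intro u z
    rw [norm_sub_smul_sq, norm_sub_smul_sq]
    field_simp
    ring
  have Cconv : ∀ a b : H × H, ∀ s t : ℝ, 0 ≤ s → 0 ≤ t → s + t = 1 →
      Cfun (s•a + t•b) ≤ s*Cfun a + t*Cfun b := by
    intro a b s t hs ht hst
    rcases eq_or_lt_of_le hs with hs0 | hs0
    · have ht1 : t = 1 := by linarith
      rw [← hs0, ht1]; simp
    rcases eq_or_lt_of_le ht with ht0 | ht0
    · have hs1 : s = 1 := by linarith
      rw [← ht0, hs1]; simp
    by_contra hcon
    push_neg at hcon
    set δ : ℝ := (Cfun (s•a + t•b) - (s*Cfun a + t*Cfun b))/2 with hδdef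
    have hδ : 0 < δ := by rw [hδdef]; linarith
    obtain ⟨za, hza⟩ := D2 a δ hδ
    obtain ⟨zb, hzb⟩ := D2 b δ hδ
    set U : H × H := s•a + t•b with hUdef
    set Z : H × H := s•za + t•zb with hZdef
    have step0 : Cfun U ≤ 1/(2*ε)*(‖U.1‖^2 + ‖U.2‖^2) - (⟪U.1, Z.1⟫ + ⟪U.2, Z.2⟫) + l Z := by
      have := D1 U Z
      simp only [hCfundef]
      linarith
    have he1 : U.1 - ε•Z.1 = s•(a.1 - ε•za.1) + t•(b.1 - ε•zb.1) := by
      rw [hUdef, hZdef]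
      simp only [Prod.fst_add, Prod.smul_fst]
      module
    have he2 : U.2 - ε•Z.2 = s•(a.2 - ε•za.2) + t•(b.2 - ε•zb.2) := by
      rw [hUdef, hZdef]
      simp only [Prod.snd_add, Prod.smul_snd]
      module
    have hcomb1 : ‖U.1 - ε•Z.1‖^2 ≤ s*‖a.1 - ε•za.1‖^2 + t*‖b.1 - ε•zb.1‖^2 := by
      rw [he1]; exact sqnorm_combo _ _ s t hs ht hst
    have hcomb2 : ‖U.2 - ε•Z.2‖^2 ≤ s*‖a.2 - ε•za.2‖^2 + t*‖b.2 - ε•zb.2‖^2 := by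
      rw [he2]; exact sqnorm_combo _ _ s t hs ht hst
    have hZ1 : Z.1 = s•za.1 + t•zb.1 := by rw [hZdef]; simp
    have hZ2 : Z.2 = s•za.2 + t•zb.2 := by rw [hZdef]; simp
    have hM := hMconv za zb s t hs ht hst
    rw [show (s•za + t•zb).1 = Z.1 from by rw [hZdef],
      show (s•za + t•zb).2 = Z.2 from by rw [hZdef],
      show s•za + t•zb = Z from by rw [hZdef]] at hM
    have idU := hid U Z
    have ida := hid a za
    have idb := hid b zb
    have ida' : s*(1/(2*ε)*(‖a.1‖^2 + ‖a.2‖^2) - (⟪a.1, za.1⟫ + ⟪a.2, za.2⟫))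
        = s*(1/(2*ε)*(‖a.1 - ε•za.1‖^2 + ‖a.2 - ε•za.2‖^2) - ε/2*(‖za.1‖^2 + ‖za.2‖^2)) := by
      rw [ida]
    have idb' : t*(1/(2*ε)*(‖b.1‖^2 + ‖b.2‖^2) - (⟪b.1, zb.1⟫ + ⟪b.2, zb.2⟫))
        = t*(1/(2*ε)*(‖b.1 - ε•zb.1‖^2 + ‖b.2 - ε•zb.2‖^2) - ε/2*(‖zb.1‖^2 + ‖zb.2‖^2)) := by
      rw [idb]
    have m1 : 1/(2*ε)*(‖U.1 - ε•Z.1‖^2 + ‖U.2 - ε•Z.2‖^2)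
        ≤ 1/(2*ε)*((s*‖a.1 - ε•za.1‖^2 + t*‖b.1 - ε•zb.1‖^2)
          + (s*‖a.2 - ε•za.2‖^2 + t*‖b.2 - ε•zb.2‖^2)) :=
      mul_le_mul_of_nonneg_left (by linarith [hcomb1, hcomb2]) (by positivity)
    have key : Cfun U ≤ s*(1/(2*ε)*(‖a.1‖^2 + ‖a.2‖^2) - (⟪a.1, za.1⟫ + ⟪a.2, za.2⟫) + l za)
        + t*(1/(2*ε)*(‖b.1‖^2 + ‖b.2‖^2) - (⟪b.1, zb.1⟫ + ⟪b.2, zb.2⟫) + l zb) := by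
      linarith [step0, idU, ida', idb', hM, m1]
    have ha' : 1/(2*ε)*(‖a.1‖^2 + ‖a.2‖^2) - (⟪a.1, za.1⟫ + ⟪a.2, za.2⟫) + l za
        ≤ Cfun a + δ := by
      simp only [hCfundef]; linarith [hza]
    have hb' : 1/(2*ε)*(‖b.1‖^2 + ‖b.2‖^2) - (⟪b.1, zb.1⟫ + ⟪b.2, zb.2⟫) + l zb
        ≤ Cfun b + δ := by
      simp only [hCfundef]; linarith [hzb]
    have mula := mul_le_mul_of_nonneg_left ha' hs
    have mulb := mul_le_mul_of_nonneg_left hb' ht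
    have hsum : s*δ + t*δ = δ := by linear_combination δ*hst
    linarith [key, mula, mulb, hsum, hδ, hcon]
  -- S-convexity : smoothness of l itself
  have Sconv : ∀ a b : H × H, ∀ s t : ℝ, 0 ≤ s → 0 ≤ t → s + t = 1 →
      1/(2*ε)*(‖(s•a + t•b).1‖^2 + ‖(s•a + t•b).2‖^2) - l (s•a + t•b)
        ≤ s*(1/(2*ε)*(‖a.1‖^2 + ‖a.2‖^2) - l a) + t*(1/(2*ε)*(‖b.1‖^2 + ‖b.2‖^2) - l b) := by
    intro a b s t hs ht hst
    have h := Cconv (-a.2, -a.1) (-b.2, -b.1) s t hs ht hst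
    have hpt : s•((-a.2 : H), (-a.1 : H)) + t•((-b.2 : H), (-b.1 : H))
        = (-(s•a + t•b).2, -(s•a + t•b).1) := by
      apply Prod.ext
      · simp only [Prod.fst_add, Prod.smul_fst, Prod.snd_add, Prod.smul_snd]; module
      · simp only [Prod.fst_add, Prod.smul_fst, Prod.snd_add, Prod.smul_snd]; module
    rw [hpt] at h
    have hCS : ∀ w : H × H, Cfun (-w.2, -w.1) = 1/(2*ε)*(‖w.1‖^2 + ‖w.2‖^2) - l w := by
      intro w
      simp only [hCfundef, hlstardef, norm_neg, neg_neg]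
      ring_nf
    rw [hCS (s•a + t•b), hCS a, hCS b] at h
    exact h
  -- per-cell mixed second difference bound
  have lemE : ∀ u₁ u₂ v v' : H,
      l (u₁, v') + l (u₂, v) - l (u₁, v) - l (u₂, v')
        ≤ 1/(4*ε)*(‖u₁ - u₂‖^2 + ‖v - v'‖^2) := by
    intro u₁ u₂ v v'
    have h2 : (0:ℝ) ≤ 1/2 := by norm_num
    have hsum : (1/2 : ℝ) + 1/2 = 1 := by norm_num
    have hS := Sconv (u₁, v') (u₂, v) (1/2) (1/2) h2 h2 hsum
    have hl := hlconv (u₁, v) (u₂, v') (1/2) (1/2) h2 h2 hsum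
    have hP : (1/2:ℝ)•((u₁:H), (v:H)) + (1/2:ℝ)•((u₂:H), (v':H))
        = (1/2:ℝ)•((u₁:H), (v':H)) + (1/2:ℝ)•((u₂:H), (v:H)) := by
      apply Prod.ext
      · simp
      · simp only [Prod.fst_add, Prod.smul_fst, Prod.snd_add, Prod.smul_snd]; module
    rw [hP] at hl
    have hc1 : ((1/2:ℝ)•((u₁:H), (v':H)) + (1/2:ℝ)•((u₂:H), (v:H))).1
        = (1/2:ℝ)•u₁ + (1/2:ℝ)•u₂ := by simp
    have hc2 : ((1/2:ℝ)•((u₁:H), (v':H)) + (1/2:ℝ)•((u₂:H), (v:H))).2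
        = (1/2:ℝ)•v' + (1/2:ℝ)•v := by simp
    rw [hc1, hc2] at hS
    have hh1 : 1/(2*ε)*‖(1/2:ℝ)•u₁ + (1/2:ℝ)•u₂‖^2
        = 1/(2*ε)*(‖u₁‖^2/2 + ‖u₂‖^2/2 - ‖u₁ - u₂‖^2/4) := by rw [half_half_sq]
    have hh2 : 1/(2*ε)*‖(1/2:ℝ)•v' + (1/2:ℝ)•v‖^2
        = 1/(2*ε)*(‖v'‖^2/2 + ‖v‖^2/2 - ‖v' - v‖^2/4) := by rw [half_half_sq]
    have hv : 1/(8*ε)*‖v' - v‖^2 = 1/(8*ε)*‖v - v'‖^2 := by rw [norm_sub_rev]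
    simp only [] at hS hl
    ring_nf at hS hl hh1 hh2 hv ⊢
    linarith [hS, hl, hh1, hh2, hv]
  -- strong-convexity midpoint inequality for the partial functions
  have hfmid : ∀ u x p q : H,
      l (u, (1/2:ℝ)•p + (1/2:ℝ)•q) - ⟪x, (1/2:ℝ)•p + (1/2:ℝ)•q⟫
        ≤ (l (u,p) - ⟪x,p⟫)/2 + (l (u,q) - ⟪x,q⟫)/2 - ε/8*‖p - q‖^2 := by
    intro u x p q
    have h2 : (0:ℝ) ≤ 1/2 := by norm_num
    have hsum : (1/2 : ℝ) + 1/2 = 1 := by norm_num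
    have hM := hMconv (u, p) (u, q) (1/2) (1/2) h2 h2 hsum
    have hpt : (1/2:ℝ)•((u:H), (p:H)) + (1/2:ℝ)•((u:H), (q:H))
        = ((u:H), (1/2:ℝ)•p + (1/2:ℝ)•q) := by
      apply Prod.ext
      · simp only [Prod.fst_add, Prod.smul_fst]; module
      · simp
    rw [hpt] at hM
    simp only [] at hM
    have hh : ε/2*‖(1/2:ℝ)•p + (1/2:ℝ)•q‖^2
        = ε/2*(‖p‖^2/2 + ‖q‖^2/2 - ‖p - q‖^2/4) := by rw [half_half_sq]
    have hin : ⟪x, (1/2:ℝ)•p + (1/2:ℝ)•q⟫ = (1/2)*⟪x,p⟫ + (1/2)*⟪x,q⟫ := by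
      rw [inner_add_right, real_inner_smul_right, real_inner_smul_right]
    linarith [hM, hh, hin]
  -- existence of minimizers for p ↦ l(u,p) - ⟪x,p⟫
  have hmin_ex : ∀ u x : H, ∃ v : H, ∀ p : H, l (u,v) - ⟪x,v⟫ ≤ l (u,p) - ⟪x,p⟫ := by
    intro u x
    have := lem_min (fun p => l (u,p) - ⟪x,p⟫) ε hε (fun p q => hfmid u x p q) ?_ ?_
    · exact this
    · -- bounded below
      refine ⟨-C₀ - (2/ε)*‖x‖^2 - ⟪x, z₀.2⟫, ?_⟩
      rintro y ⟨p, rfl⟩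
      have h1 := hlow' (u, p)
      have h2 := inner_quarter hε x p z₀.2
      simp only [] at h1 ⊢
      have hnn : (0:ℝ) ≤ ε/8*‖u - z₀.1‖^2 := by positivity
      linarith [h1, h2, hnn]
    · -- lower semicontinuous
      intro p₀ y hy
      simp only [] at hy
      set η : ℝ := ((l (u, p₀) - ⟪x, p₀⟫) - y)/2 with hηdef
      have hη : 0 < η := by rw [hηdef]; linarith
      have hcont : Continuous fun p : H => ⟪x, p⟫ :=
        (continuous_const.inner continuous_id)
      have A : ∀ᶠ p in nhds p₀, ⟪x, p⟫ < ⟪x, p₀⟫ + η :=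
        Filter.Tendsto.eventually_lt_const
          (show ⟪x, p₀⟫ < ⟪x, p₀⟫ + η by linarith) (hcont.tendsto p₀)
      have B0 := hllsc (u, p₀) (l (u, p₀) - η) (by linarith)
      have hmap : Filter.Tendsto (fun p : H => ((u : H), p)) (nhds p₀) (nhds (u, p₀)) :=
        ((continuous_const.prodMk continuous_id).tendsto p₀)
      have B : ∀ᶠ p in nhds p₀, l (u, p₀) - η < l (u, p) := hmap.eventually B0
      refine (A.and B).mono fun p hp => ?_
      simp only []
      have := hp.1; have := hp.2
      linarith
  -- define R
  set R : H → H → H := fun u x => (hmin_ex u x).choose with hRdef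
  have hR : ∀ u x : H, ∀ p : H, l (u, R u x) - ⟪x, R u x⟫ ≤ l (u,p) - ⟪x,p⟫ := by
    intro u x
    exact (hmin_ex u x).choose_spec
  clear_value R
  -- strong minimality
  have hstrong : ∀ u x p : H,
      l (u, R u x) - ⟪x, R u x⟫ + ε/4*‖p - R u x‖^2 ≤ l (u,p) - ⟪x,p⟫ := by
    intro u x p
    have h1 := hfmid u x p (R u x)
    have h2 := hR u x ((1/2:ℝ)•p + (1/2:ℝ)•(R u x))
    have h3 := hR u x p
    linarith
  -- subdifferential characterization
  have hms : ∀ u x v : H, MemSubdiff2 L u v x ↔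
      ∀ p : H, l (u,v) - ⟪x,v⟫ ≤ l (u,p) - ⟪x,p⟫ := by
    intro u x v
    constructor
    · intro h p
      have := h p
      rw [hLl, hLl, ← EReal.coe_add, EReal.coe_le_coe_iff] at this
      have hi : ⟪x, p - v⟫ = ⟪x,p⟫ - ⟪x,v⟫ := inner_sub_right _ _ _
      linarith
    · intro h r
      rw [hLl, hLl, ← EReal.coe_add, EReal.coe_le_coe_iff]
      have hi : ⟪x, r - v⟫ = ⟪x,r⟫ - ⟪x,v⟫ := inner_sub_right _ _ _
      have := h r
      linarith
  -- choose the subdivision number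
  obtain ⟨mN, hmN⟩ := exists_nat_gt (1/ε^2)
  set M : ℝ := (mN : ℝ) with hMdef
  have hM0 : 0 < M := lt_trans (by positivity) hmN
  have hmN0 : 0 < mN := by rw [hMdef] at hM0; exact_mod_cast hM0
  have hM1 : 1 ≤ M := by rw [hMdef]; exact_mod_cast hmN0
  set K : ℝ := (4 + M)/ε + 1 with hKdef
  have hK0 : 0 < K := by positivity
  refine ⟨R, fun u x => ⟨?_, ?_⟩, ⟨K, hK0, ?_⟩⟩
  · exact (hms u x (R u x)).mpr (hR u x)
  · intro v hv
    have hvmin := (hms u x v).mp hv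
    have h1 := hstrong u x v
    have h2 := hvmin (R u x)
    have h3 : ‖v - R u x‖^2 ≤ 0 := by nlinarith [h1, h2]
    have h4 : ‖v - R u x‖ = 0 :=
      le_antisymm (by nlinarith [norm_nonneg (v - R u x)]) (norm_nonneg _)
    exact sub_eq_zero.mp (norm_eq_zero.mp h4)
  · intro u₁ x₁ u₂ x₂
    set v₁ : H := R u₁ x₁ with hv₁
    set v₂ : H := R u₂ x₂ with hv₂
    set a : ℝ := ‖u₁ - u₂‖ with ha
    set b : ℝ := ‖x₁ - x₂‖ with hb
    set d : ℝ := ‖v₁ - v₂‖ with hd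
    have ha0 : 0 ≤ a := norm_nonneg _
    have hb0 : 0 ≤ b := norm_nonneg _
    have hd0 : 0 ≤ d := norm_nonneg _
    have hd' : ‖v₂ - v₁‖ = d := by rw [hd, norm_sub_rev]
    -- lower bound on the mixed difference
    have hs1 := hstrong u₁ x₁ v₂
    have hs2 := hstrong u₂ x₂ v₁
    rw [← hv₁] at hs1
    rw [← hv₂] at hs2
    have hsq1 : ε/4*‖v₂ - v₁‖^2 = ε/4*d^2 := by rw [hd']
    have hsq2 : ε/4*‖v₁ - v₂‖^2 = ε/4*d^2 := by rw [← hd]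
    have hexp : ⟪x₁ - x₂, v₂ - v₁⟫ = ⟪x₁,v₂⟫ - ⟪x₁,v₁⟫ - ⟪x₂,v₂⟫ + ⟪x₂,v₁⟫ := by
      rw [inner_sub_left, inner_sub_right, inner_sub_right]; ring
    have hcs : -(b*d) ≤ ⟪x₁ - x₂, v₂ - v₁⟫ := by
      have h := abs_real_inner_le_norm (x₁ - x₂) (v₂ - v₁)
      rw [hd', ← hb] at h
      have := neg_abs_le ⟪x₁ - x₂, v₂ - v₁⟫
      linarith
    have hD_low : -(b*d) + ε/2*d^2 ≤ l (u₁,v₂) + l (u₂,v₁) - l (u₁,v₁) - l (u₂,v₂) := by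
      linarith [hs1, hs2, hcs, hexp, hsq1, hsq2]
    -- upper bound by telescoping
    have hD_up : l (u₁,v₂) + l (u₂,v₁) - l (u₁,v₁) - l (u₂,v₂)
        ≤ 1/(4*ε)*(M*a^2 + d^2/M) := by
      set w : ℕ → H := fun j => v₁ + ((j:ℝ)/M)•(v₂ - v₁) with hwdef
      have hw0 : w 0 = v₁ := by simp [hwdef]
      have hwm : w mN = v₂ := by
        rw [hwdef]; simp only [hMdef]
        rw [div_self (Nat.cast_ne_zero.mpr hmN0.ne' : ((mN:ℝ) ≠ 0)), one_smul]
        abel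
      have hdiff : ∀ j : ℕ, w (j+1) - w j = (1/M)•(v₂ - v₁) := by
        intro j
        rw [hwdef]
        simp only []
        rw [show ((1:ℝ)/M) = (((j:ℕ)+1:ℝ))/M - ((j:ℝ))/M by push_cast; ring, sub_smul]
        push_cast
        abel
      have hcell : ∀ j : ℕ, (l (u₁, w (j+1)) - l (u₂, w (j+1))) - (l (u₁, w j) - l (u₂, w j))
          ≤ 1/(4*ε)*(a^2 + (d/M)^2) := by
        intro j
        have h := lemE u₁ u₂ (w j) (w (j+1))
        have hnorm : ‖w j - w (j+1)‖^2 = (d/M)^2 := by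
          rw [norm_sub_rev, hdiff j, norm_smul, Real.norm_eq_abs,
            abs_of_pos (by positivity : (0:ℝ) < 1/M), ← hd', mul_pow]
          ring
        rw [hnorm, ← ha] at h
        linarith
      have htel := Finset.sum_range_sub (fun j => l (u₁, w j) - l (u₂, w j)) mN
      have hsum_le : ∑ j ∈ Finset.range mN,
          ((l (u₁, w (j+1)) - l (u₂, w (j+1))) - (l (u₁, w j) - l (u₂, w j)))
          ≤ (mN : ℝ) * (1/(4*ε)*(a^2 + (d/M)^2)) := by
        calc ∑ j ∈ Finset.range mN,
            ((l (u₁, w (j+1)) - l (u₂, w (j+1))) - (l (u₁, w j) - l (u₂, w j)))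
            ≤ ∑ _j ∈ Finset.range mN, 1/(4*ε)*(a^2 + (d/M)^2) :=
              Finset.sum_le_sum (fun j _ => hcell j)
          _ = (mN : ℝ) * (1/(4*ε)*(a^2 + (d/M)^2)) := by
              rw [Finset.sum_const, Finset.card_range, nsmul_eq_mul]
      rw [htel, hw0, hwm] at hsum_le
      have hMeq : (mN : ℝ) * (1/(4*ε)*(a^2 + (d/M)^2)) = 1/(4*ε)*(M*a^2 + d^2/M) := by
        rw [← hMdef]
        field_simp
      rw [hMeq] at hsum_le
      linarith [hsum_le]
    -- combine the bounds
    have h1 : 1 < M*ε^2 := by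
      rw [hMdef]
      calc 1 = (1/ε^2)*ε^2 := by field_simp
        _ < (mN:ℝ)*ε^2 := by
            exact mul_lt_mul_of_pos_right hmN (by positivity)
    have h2 : 1/(4*ε)*(d^2/M) ≤ ε/4*d^2 := by
      have e : ε/4*d^2 - 1/(4*ε)*(d^2/M) = (M*ε^2 - 1)*d^2/(4*ε*M) := by
        field_simp
      have hnn : 0 ≤ (M*ε^2 - 1)*d^2/(4*ε*M) :=
        div_nonneg (mul_nonneg (by linarith) (sq_nonneg d)) (by positivity)
      linarith [e, hnn]
    have hqd : ε/4*d^2 ≤ M/(4*ε)*a^2 + b*d := by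
      ring_nf at hD_low hD_up h2 ⊢
      linarith [hD_low, hD_up, h2]
    -- conclude
    by_contra hcon
    push_neg at hcon
    have hdpos : 0 < d := lt_of_le_of_lt (by positivity) hcon
    have habK : a + b < d/K := by
      rw [lt_div_iff₀ hK0]
      calc (a+b)*K = K*(a+b) := by ring
        _ < d := hcon
    have hab0 : 0 ≤ a + b := by linarith
    have hfrac0 : 0 ≤ d/K := by positivity
    have hb_le : b*d ≤ (d/K)*d :=
      mul_le_mul_of_nonneg_right (by linarith) hd0
    have ha_le : a^2 ≤ (d/K)^2 := by
      have h3 : a ≤ d/K := by linarith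
      nlinarith [h3, ha0]
    have ha_le2 : M/(4*ε)*a^2 ≤ M/(4*ε)*(d/K)^2 :=
      mul_le_mul_of_nonneg_left ha_le (by positivity)
    have hεK : ε*K = 4 + M + ε := by
      rw [hKdef]; field_simp
    have hKK : K + M/(4*ε) < ε/4*K^2 := by
      have e : ε/4*K^2 - K - M/(4*ε) = ((ε*K)^2 - 4*(ε*K) - M)/(4*ε) := by
        field_simp
      rw [hεK] at e
      have hpos : 0 < ((4 + M + ε)^2 - 4*(4 + M + ε) - M)/(4*ε) := by
        apply div_pos
        · nlinarith [hM1, hε]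
        · positivity
      linarith [e, hpos]
    have e2 : M/(4*ε)*(d/K)^2 + (d/K)*d = (K + M/(4*ε))*(d^2/K^2) := by
      field_simp
      ring
    have e3 : ε/4*d^2 = (ε/4*K^2)*(d^2/K^2) := by
      field_simp
    have hstrict : (K + M/(4*ε))*(d^2/K^2) < (ε/4*K^2)*(d^2/K^2) :=
      mul_lt_mul_of_pos_right hKK (by positivity)
    linarith [hqd, hb_le, ha_le2, e2, e3, hstrict]
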